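/- Let T be a tree of order n ≥ 3 which is not NEB (nearly even branching) at a vertex v. Then no real skew-symmetric matrix A with graph T has the Duarte property with respect to v. -/

import Mathlib

open Polynomial Matrix Finset
open scoped Classical

noncomputable section

/-- The graph of a square real matrix: `i ~ j` iff `i ≠ j` and the `(i,j)` or
`(j,i)` entry is nonzero. -/
def graphOf {N : ℕ} (A : Matrix (Fin N) (Fin N) ℝ) : SimpleGraph (Fin N) :=
  SimpleGraph.fromRel (fun i j => A i j ≠ 0)

/-- The principal submatrix of `A` on the index set `S`. -/
def subOn {N : ℕ} (A : Matrix (Fin N) (Fin N) ℝ) (S : Finset (Fin N)) :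
    Matrix {x // x ∈ S} {x // x ∈ S} ℝ :=
  A.submatrix (fun x => x.1) (fun x => x.1)

/-- The vertex set of the connected component of `v` in the subgraph of `G`
induced on `S`. -/
def comp {N : ℕ} (G : SimpleGraph (Fin N)) (S : Finset (Fin N)) (v : Fin N) :
    Finset (Fin N) :=
  S.filter (fun u => ∃ w : G.Walk v u, ∀ x ∈ w.support, x ∈ S)

/-- The eigenvalues of the real skew-symmetric matrix `A` are `i·l 0, …`,
expressed via the characteristic polynomial over `ℂ`. -/
def specIm {m : Type} [Fintype m] [DecidableEq m] (A : Matrix m m ℝ)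
    (l : Fin (Fintype.card m) → ℝ) : Prop :=
  (A.map (Complex.ofReal : ℝ → ℂ)).charpoly = ∏ j, (X - C (Complex.I * (l j : ℂ)))

/-- The (purely imaginary) spectrum of `B` strictly interlaces that of `A`,
in the ordering `i·a ≤ i·b ↔ a ≤ b`. -/
def StrictInterlace {m m' : Type} [Fintype m] [DecidableEq m] [Fintype m'] [DecidableEq m']
    (A : Matrix m m ℝ) (B : Matrix m' m' ℝ) : Prop :=
  ∃ (h : Fintype.card m' + 1 = Fintype.card m) (l : Fin (Fintype.card m) → ℝ)
    (mu : Fin (Fintype.card m') → ℝ),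
    specIm A l ∧ specIm B mu ∧
      ∀ j : Fin (Fintype.card m'),
        l (Fin.cast h j.castSucc) < mu j ∧ mu j < l (Fin.cast h j.succ)

/-- Fuel-based recursion for the Duarte property of the principal submatrix of
`A` on `S` with respect to the vertex `w ∈ S`. -/
def DuarteAux {N : ℕ} (A : Matrix (Fin N) (Fin N) ℝ) :
    ℕ → Finset (Fin N) → Fin N → Prop
  | 0, S, w => S = {w}
  | (k + 1), S, w => S = {w} ∨
      (StrictInterlace (subOn A S) (subOn A (S.erase w)) ∧
        ∀ v ∈ S.erase w, (graphOf A).Adj w v →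
          DuarteAux A k (comp (graphOf A) (S.erase w) v) v)

/-- `A` has the Duarte property with respect to the vertex `w`. -/
def Duarte {N : ℕ} (A : Matrix (Fin N) (Fin N) ℝ) (w : Fin N) : Prop :=
  DuarteAux A N Finset.univ w

/-- Fuel-based recursion for the nearly even branching (NEB) property of the
subtree of `T` on `S` at the vertex `w ∈ S`. -/
def NEBAux {N : ℕ} (T : SimpleGraph (Fin N)) : ℕ → Finset (Fin N) → Fin N → Prop
  | 0, S, w => S = {w}
  | (k + 1), S, w => S = {w} ∨
      ((((S.erase w).filter
            (fun v => T.Adj w v ∧ Odd (comp T (S.erase w) v).card)).card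
          = if Even S.card then 1 else 0) ∧
        ∀ v ∈ S.erase w, T.Adj w v → NEBAux T k (comp T (S.erase w) v) v)

/-- The tree `T` is nearly even branching (NEB) at the vertex `w`. -/
def NEB {N : ℕ} (T : SimpleGraph (Fin N)) (w : Fin N) : Prop :=
  NEBAux T N Finset.univ w

/-! ### Auxiliary lemmas -/

section AuxLemmas

variable {N : ℕ}

lemma mem_comp_iff {G : SimpleGraph (Fin N)} {S : Finset (Fin N)} {v u : Fin N} :
    u ∈ comp G S v ↔ u ∈ S ∧ ∃ w : G.Walk v u, ∀ x ∈ w.support, x ∈ S := by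
  simp [_root_.comp]

lemma comp_subset {G : SimpleGraph (Fin N)} {S : Finset (Fin N)} {v : Fin N} :
    comp G S v ⊆ S := Finset.filter_subset _ _

lemma self_mem_comp {G : SimpleGraph (Fin N)} {S : Finset (Fin N)} {v : Fin N}
    (hv : v ∈ S) : v ∈ comp G S v :=
  mem_comp_iff.2 ⟨hv, SimpleGraph.Walk.nil, by simp [hv]⟩

lemma support_subset_comp {G : SimpleGraph (Fin N)} {S : Finset (Fin N)} {v u : Fin N}
    (p : G.Walk v u) (hp : ∀ x ∈ p.support, x ∈ S) :
    ∀ x ∈ p.support, x ∈ comp G S v := by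
  intro x hx
  refine mem_comp_iff.2 ⟨hp x hx, p.takeUntil x hx, fun y hy => hp y ?_⟩
  exact p.support_takeUntil_subset hx hy

lemma comp_connected {G : SimpleGraph (Fin N)} {S : Finset (Fin N)} {v u : Fin N}
    (hu : u ∈ comp G S v) :
    ∃ p : G.Walk v u, ∀ x ∈ p.support, x ∈ comp G S v := by
  obtain ⟨-, p, hp⟩ := mem_comp_iff.1 hu
  exact ⟨p, support_subset_comp p hp⟩

lemma comp_closed {G : SimpleGraph (Fin N)} {S : Finset (Fin N)} {v i j : Fin N}
    (hi : i ∈ comp G S v) (hadj : G.Adj i j) (hj : j ∈ S) : j ∈ comp G S v := by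
  obtain ⟨-, p, hp⟩ := mem_comp_iff.1 hi
  refine mem_comp_iff.2 ⟨hj, p.concat hadj, fun x hx => ?_⟩
  rw [SimpleGraph.Walk.support_concat, List.mem_append] at hx
  rcases hx with hx | hx
  · exact hp x hx
  · simp_all

lemma graphOf_eq (A : Matrix (Fin N) (Fin N) ℝ) (T : SimpleGraph (Fin N))
    (hskew : Aᵀ = -A)
    (hgraph : ∀ i j, i ≠ j → (A i j ≠ 0 ↔ T.Adj i j)) : graphOf A = T := by
  ext i j
  simp only [graphOf, SimpleGraph.fromRel_adj]
  constructor
  · rintro ⟨hne, h | h⟩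
    · exact (hgraph i j hne).1 h
    · exact ((hgraph j i (Ne.symm hne)).1 h).symm
  · intro h
    exact ⟨h.ne, Or.inl ((hgraph i j h.ne).2 h)⟩

/-! ### Spectral lemmas -/

def subCx (M : Matrix (Fin N) (Fin N) ℂ) (S : Finset (Fin N)) :
    Matrix {x // x ∈ S} {x // x ∈ S} ℂ :=
  M.submatrix (fun x => x.1) (fun x => x.1)

lemma det_skew_odd {m : Type} [Fintype m] [DecidableEq m] (M : Matrix m m ℂ)
    (h : Mᵀ = -M) (hodd : Odd (Fintype.card m)) : M.det = 0 := by
  have h1 : M.det = (-1) ^ (Fintype.card m) * M.det := by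
    conv_lhs => rw [← Matrix.det_transpose, h, Matrix.det_neg]
  rw [hodd.neg_one_pow] at h1
  have h2 : (2 : ℂ) * M.det = 0 := by linear_combination h1
  rcases mul_eq_zero.1 h2 with h | h
  · norm_num at h
  · exact h

lemma X_dvd_charpoly_skew_odd {m : Type} [Fintype m] [DecidableEq m] (M : Matrix m m ℂ)
    (h : Mᵀ = -M) (hodd : Odd (Fintype.card m)) : X ∣ M.charpoly := by
  rw [Polynomial.X_dvd_iff]
  have hd := Matrix.det_eq_sign_charpoly_coeff M
  rw [det_skew_odd M h hodd] at hd
  have : ((-1 : ℂ) ^ Fintype.card m) ≠ 0 := by simp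
  field_simp at hd
  exact (mul_eq_zero.1 hd.symm).resolve_left this

lemma charpoly_subCx_split (M : Matrix (Fin N) (Fin N) ℂ) (U C : Finset (Fin N)) (hCU : C ⊆ U)
    (hz : ∀ i ∈ C, ∀ j ∈ U, j ∉ C → M i j = 0 ∧ M j i = 0) :
    (subCx M U).charpoly = (subCx M C).charpoly * (subCx M (U \ C)).charpoly := by
  classical
  let e : {x // x ∈ C} ⊕ {x // x ∈ U \ C} ≃ {x // x ∈ U} :=
    { toFun := fun x => Sum.elim (fun c => ⟨c.1, hCU c.2⟩)
        (fun d => ⟨d.1, (Finset.mem_sdiff.mp d.2).1⟩) x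
      invFun := fun x => if h : x.1 ∈ C then Sum.inl ⟨x.1, h⟩
        else Sum.inr ⟨x.1, Finset.mem_sdiff.mpr ⟨x.2, h⟩⟩
      left_inv := by
        rintro (c | d)
        · simp
        · have := (Finset.mem_sdiff.mp d.2).2
          simp [this]
      right_inv := by
        intro x
        by_cases h : x.1 ∈ C <;> simp [h] }
  have key : subCx M U =
      (Matrix.fromBlocks (subCx M C) 0 0 (subCx M (U \ C))).submatrix e.symm e.symm := by
    ext x y
    by_cases hx : x.1 ∈ C <;> by_cases hy : y.1 ∈ C <;>
      simp only [subCx, Matrix.submatrix_apply, e, Equiv.coe_fn_symm_mk, hx, hy,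
        dif_pos, dif_neg, not_false_iff, Matrix.fromBlocks_apply₁₁,
        Matrix.fromBlocks_apply₁₂, Matrix.fromBlocks_apply₂₁, Matrix.fromBlocks_apply₂₂,
        Matrix.zero_apply]
    · exact (hz x.1 hx y.1 y.2 hy).1
    · exact (hz y.1 hy x.1 x.2 hx).2.symm ▸ rfl
  rw [key]
  have : (Matrix.fromBlocks (subCx M C) 0 0 (subCx M (U \ C))).submatrix e.symm e.symm
      = Matrix.reindex e e (Matrix.fromBlocks (subCx M C) 0 0 (subCx M (U \ C))) := by
    rw [Matrix.reindex_apply]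
  rw [this, Matrix.charpoly_reindex, Matrix.charpoly_fromBlocks_zero₂₁]

lemma interlace_mu_strictMono {n : ℕ} {m : ℕ}
    {h : n + 1 = m} {l : Fin m → ℝ} {mu : Fin n → ℝ}
    (hi : ∀ j : Fin n, l (Fin.cast h j.castSucc) < mu j ∧ mu j < l (Fin.cast h j.succ)) :
    StrictMono mu := by
  set g : Fin (n + 1) → ℝ := fun i => l (Fin.cast h i) with hg0
  have hg : StrictMono g := by
    rw [Fin.strictMono_iff_lt_succ]
    intro i
    exact lt_trans (hi i).1 (hi i).2
  intro a b hab
  have h1 : mu a < g a.succ := (hi a).2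
  have h2 : g b.castSucc < mu b := (hi b).1
  have h3 : g a.succ ≤ g b.castSucc := hg.monotone (by
    rw [Fin.le_def]
    rw [Fin.lt_def] at hab
    simp only [Fin.val_succ, Fin.coe_castSucc]
    omega)
  linarith

lemma no_double_zero {n : ℕ} {mu : Fin n → ℝ} (hmu : StrictMono mu)
    (hdvd : X ^ 2 ∣ ∏ j, (X - C (Complex.I * (mu j : ℂ)))) : False := by
  set f : Fin n → ℂ := fun j => Complex.I * (mu j : ℂ) with hf
  set p : Polynomial ℂ := ∏ j, (X - C (f j)) with hp0
  have hmon : p.Monic := monic_prod_of_monic _ _ (fun j _ => monic_X_sub_C (f j))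
  have hp : p ≠ 0 := hmon.ne_zero
  have h2 : 2 ≤ p.rootMultiplicity 0 := by
    rw [Polynomial.le_rootMultiplicity_iff hp]
    simpa using hdvd
  have hroots : p.roots = Finset.univ.val.map f := by
    rw [hp0, Finset.prod_eq_multiset_prod]
    have : Multiset.map (fun j => X - C (f j)) Finset.univ.val
        = Multiset.map (fun a => X - C a) (Multiset.map f Finset.univ.val) := by
      rw [Multiset.map_map]; rfl
    rw [this]
    exact roots_multiset_prod_X_sub_C _
  have hcount : p.roots.count 0 = (Finset.univ.filter (fun j => 0 = f j)).card := by
    rw [hroots, Multiset.count_map]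
    rfl
  have h3 : 2 ≤ (Finset.univ.filter (fun j => 0 = f j)).card := by
    rw [← hcount, Polynomial.count_roots]
    exact h2
  obtain ⟨a, ha, b, hb, hab⟩ := Finset.one_lt_card.mp h3
  simp only [Finset.mem_filter, Finset.mem_univ, true_and] at ha hb
  have hz : ∀ {c : Fin n}, (0 : ℂ) = f c → mu c = 0 := by
    intro c hc
    have := hc.symm
    rw [hf] at this
    rcases mul_eq_zero.1 this with h | h
    · exact absurd h Complex.I_ne_zero
    · exact_mod_cast h
  exact hab (hmu.injective ((hz ha).trans (hz hb).symm))

lemma no_two_odd (A : Matrix (Fin N) (Fin N) ℝ) (hskew : Aᵀ = -A)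
    (S S' : Finset (Fin N)) (C₁ C₂ : Finset (Fin N))
    (h1 : C₁ ⊆ S') (h2 : C₂ ⊆ S') (hd : Disjoint C₁ C₂)
    (hz1 : ∀ i ∈ C₁, ∀ j ∈ S', j ∉ C₁ → A i j = 0)
    (hz2 : ∀ i ∈ C₂, ∀ j ∈ S', j ∉ C₂ → A i j = 0)
    (ho1 : Odd C₁.card) (ho2 : Odd C₂.card)
    (hint : StrictInterlace (subOn A S) (subOn A S')) : False := by
  obtain ⟨hc, l, mu, hA, hB, hi⟩ := hint
  have hmu : StrictMono mu := interlace_mu_strictMono hi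
  set Ac := A.map (Complex.ofReal) with hAc
  have hskewE : ∀ i j, Ac j i = -Ac i j := by
    intro i j
    have := congrFun (congrFun hskew i) j
    simp only [Matrix.transpose_apply, Matrix.neg_apply] at this
    simp [hAc, Matrix.map_apply, this]
  have hzc1 : ∀ i ∈ C₁, ∀ j ∈ S', j ∉ C₁ → Ac i j = 0 ∧ Ac j i = 0 := by
    intro i hi' j hj hjc
    have h0 := hz1 i hi' j hj hjc
    refine ⟨by simp [hAc, Matrix.map_apply, h0], by rw [hskewE]; simp [hAc, Matrix.map_apply, h0]⟩
  have h2' : C₂ ⊆ S' \ C₁ := Finset.subset_sdiff.2 ⟨h2, hd.symm⟩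
  have hzc2 : ∀ i ∈ C₂, ∀ j ∈ S' \ C₁, j ∉ C₂ → Ac i j = 0 ∧ Ac j i = 0 := by
    intro i hi' j hj hjc
    have h0 := hz2 i hi' j (Finset.mem_sdiff.1 hj).1 hjc
    refine ⟨by simp [hAc, Matrix.map_apply, h0], by rw [hskewE]; simp [hAc, Matrix.map_apply, h0]⟩
  have hsplit1 := charpoly_subCx_split Ac S' C₁ h1 hzc1
  have hsplit2 := charpoly_subCx_split Ac (S' \ C₁) C₂ h2' hzc2
  have hsub : ∀ (Cs : Finset (Fin N)), (subCx Ac Cs)ᵀ = -(subCx Ac Cs) := by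
    intro Cs
    ext x y
    simp only [subCx, Matrix.transpose_apply, Matrix.submatrix_apply, Matrix.neg_apply]
    exact hskewE _ _
  have hx1 : X ∣ (subCx Ac C₁).charpoly :=
    X_dvd_charpoly_skew_odd _ (hsub C₁) (by simpa [Fintype.card_coe] using ho1)
  have hx2 : X ∣ (subCx Ac C₂).charpoly :=
    X_dvd_charpoly_skew_odd _ (hsub C₂) (by simpa [Fintype.card_coe] using ho2)
  have hdvd : X ^ 2 ∣ (subCx Ac S').charpoly := by
    rw [hsplit1, hsplit2, pow_two]
    exact mul_dvd_mul hx1 (dvd_mul_of_dvd_left hx2 _)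
  have hBc : (subCx Ac S').charpoly = ∏ j, (X - C (Complex.I * (mu j : ℂ))) := by
    have he : (subOn A S').map (Complex.ofReal : ℝ → ℂ) = subCx Ac S' := rfl
    rw [← he]
    exact hB
  rw [hBc] at hdvd
  exact no_double_zero hmu hdvd

end AuxLemmas
section Combo

variable {N : ℕ}

lemma comp_disjoint {T : SimpleGraph (Fin N)} (hT : T.IsTree) {S' : Finset (Fin N)}
    {w v₁ v₂ : Fin N} (hw : w ∉ S') (ha1 : T.Adj w v₁) (ha2 : T.Adj w v₂) (hne : v₁ ≠ v₂) :
    Disjoint (comp T S' v₁) (comp T S' v₂) := by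
  rw [Finset.disjoint_left]
  intro u hu1 hu2
  obtain ⟨-, p1, hp1⟩ := mem_comp_iff.1 hu1
  obtain ⟨-, p2, hp2⟩ := mem_comp_iff.1 hu2
  set q : T.Walk v₁ v₂ := p1.append p2.reverse with hq0
  have hq : ∀ x ∈ q.support, x ∈ S' := by
    intro x hx
    rw [hq0, SimpleGraph.Walk.mem_support_append_iff] at hx
    rcases hx with hx | hx
    · exact hp1 x hx
    · rw [SimpleGraph.Walk.support_reverse, List.mem_reverse] at hx
      exact hp2 x hx
  set p0 : T.Walk v₁ v₂ := SimpleGraph.Walk.cons ha1.symm (SimpleGraph.Walk.cons ha2 SimpleGraph.Walk.nil) with hp00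
  have hp0 : p0.IsPath := by
    rw [hp00]
    simp [SimpleGraph.Walk.isPath_def, ha1.ne', hne, ha2.ne]
  obtain ⟨pp, -, huniq⟩ := hT.existsUnique_path v₁ v₂
  have heq : q.bypass = p0 := (huniq q.bypass q.bypass_isPath).trans (huniq p0 hp0).symm
  have hwmem : w ∈ q.bypass.support := by
    rw [heq, hp00]
    simp
  exact hw (hq w (q.support_bypass_subset hwmem))

lemma erase_eq_biUnion {T : SimpleGraph (Fin N)} {S : Finset (Fin N)} {w : Fin N}
    (hconn : ∀ u ∈ S, ∃ p : T.Walk w u, ∀ x ∈ p.support, x ∈ S) :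
    S.erase w = ((S.erase w).filter (T.Adj w)).biUnion (fun v => comp T (S.erase w) v) := by
  apply Finset.Subset.antisymm
  · intro u hu
    have hu' := Finset.mem_erase.1 hu
    obtain ⟨p, hp⟩ := hconn u hu'.2
    have hqS : ∀ x ∈ p.bypass.support, x ∈ S := fun x hx => hp x (p.support_bypass_subset hx)
    have hqpath : p.bypass.IsPath := p.bypass_isPath
    set q := p.bypass with hq0
    clear_value q
    clear hq0 hp
    cases q with
    | nil => exact absurd rfl hu'.1
    | @cons _ v _ h q' =>
      rw [SimpleGraph.Walk.cons_isPath_iff] at hqpath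
      have hsub : ∀ x ∈ q'.support, x ∈ S.erase w := by
        intro x hx
        refine Finset.mem_erase.2 ⟨?_, hqS x (by simp [SimpleGraph.Walk.support_cons, hx])⟩
        rintro rfl
        exact hqpath.2 hx
      refine Finset.mem_biUnion.2 ⟨v, ?_, ?_⟩
      · exact Finset.mem_filter.2 ⟨hsub v q'.start_mem_support, h⟩
      · exact mem_comp_iff.2 ⟨hu, q', hsub⟩
  · intro u hu
    obtain ⟨v, -, hv⟩ := Finset.mem_biUnion.1 hu
    exact comp_subset hv

lemma filter_odd_card_mod {α : Type} [DecidableEq α] (s : Finset α) (f : α → ℕ) :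
    (s.filter (fun v => Odd (f v))).card % 2 = (∑ v ∈ s, f v) % 2 := by
  induction s using Finset.induction_on with
  | empty => simp
  | @insert a s ha ih =>
    rw [Finset.sum_insert ha, Finset.filter_insert]
    by_cases h : Odd (f a)
    · rw [if_pos h, Finset.card_insert_of_notMem (fun hc => ha (Finset.mem_filter.1 hc).1)]
      have := Nat.odd_iff.1 h
      omega
    · rw [if_neg h]
      have := Nat.even_iff.1 (Nat.not_odd_iff_even.1 h)
      omega

lemma neb_count (A : Matrix (Fin N) (Fin N) ℝ) (hskew : Aᵀ = -A)
    (T : SimpleGraph (Fin N)) (hT : T.IsTree)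
    (hgraph : ∀ i j, i ≠ j → (A i j ≠ 0 ↔ T.Adj i j))
    (S : Finset (Fin N)) (w : Fin N) (hw : w ∈ S)
    (hconn : ∀ u ∈ S, ∃ p : T.Walk w u, ∀ x ∈ p.support, x ∈ S)
    (hint : StrictInterlace (subOn A S) (subOn A (S.erase w))) :
    ((S.erase w).filter (fun v => T.Adj w v ∧ Odd (comp T (S.erase w) v).card)).card
      = if Even S.card then 1 else 0 := by
  set S' := S.erase w with hS'
  set nbrs := S'.filter (T.Adj w) with hnbrs
  have hwS' : w ∉ S' := Finset.notMem_erase w S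
  have hoe : S'.filter (fun v => T.Adj w v ∧ Odd (comp T S' v).card)
      = nbrs.filter (fun v => Odd (comp T S' v).card) := by
    rw [hnbrs, Finset.filter_filter]
  have hdisj : ∀ v₁ ∈ nbrs, ∀ v₂ ∈ nbrs, v₁ ≠ v₂ →
      Disjoint (comp T S' v₁) (comp T S' v₂) := by
    intro v₁ h1 v₂ h2 hne
    exact comp_disjoint hT hwS' (Finset.mem_filter.1 h1).2 (Finset.mem_filter.1 h2).2 hne
  have hcard : S'.card = ∑ v ∈ nbrs, (comp T S' v).card := by
    conv_lhs => rw [hS', erase_eq_biUnion hconn]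
    exact Finset.card_biUnion hdisj
  have hmod : (nbrs.filter (fun v => Odd (comp T S' v).card)).card % 2 = S'.card % 2 := by
    rw [filter_odd_card_mod nbrs (fun v => (comp T S' v).card), ← hcard]
  -- at most one odd component
  have hzA : ∀ v : Fin N, ∀ i ∈ comp T S' v, ∀ j ∈ S', j ∉ comp T S' v → A i j = 0 := by
    intro v i hi j hj hjc
    by_contra hA0
    have hij : i ≠ j := by rintro rfl; exact hjc hi
    exact hjc (comp_closed hi ((hgraph i j hij).1 hA0) hj)
  have hle : (nbrs.filter (fun v => Odd (comp T S' v).card)).card ≤ 1 := by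
    by_contra hgt
    push_neg at hgt
    obtain ⟨v₁, h1, v₂, h2, hne⟩ := Finset.one_lt_card.mp hgt
    have hm1 := Finset.mem_filter.1 h1
    have hm2 := Finset.mem_filter.1 h2
    exact no_two_odd A hskew S S' (comp T S' v₁) (comp T S' v₂)
      comp_subset comp_subset (hdisj v₁ hm1.1 v₂ hm2.1 hne)
      (hzA v₁) (hzA v₂) hm1.2 hm2.2 hint
  rw [hoe]
  have hc1 : 1 ≤ S.card := Finset.card_pos.2 ⟨w, hw⟩
  have hce : S'.card = S.card - 1 := Finset.card_erase_of_mem hw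
  by_cases hev : Even S.card
  · rw [if_pos hev]
    have := Nat.even_iff.1 hev
    omega
  · rw [if_neg hev]
    have := Nat.odd_iff.1 (Nat.not_even_iff_odd.1 hev)
    omega

lemma duarteAux_to_nebAux (A : Matrix (Fin N) (Fin N) ℝ) (T : SimpleGraph (Fin N))
    (hT : T.IsTree) (hskew : Aᵀ = -A)
    (hgraph : ∀ i j, i ≠ j → (A i j ≠ 0 ↔ T.Adj i j)) :
    ∀ (k : ℕ) (S : Finset (Fin N)) (w : Fin N), w ∈ S →
      (∀ u ∈ S, ∃ p : T.Walk w u, ∀ x ∈ p.support, x ∈ S) →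
      DuarteAux A k S w → NEBAux T k S w := by
  have hG : graphOf A = T := graphOf_eq A T hskew hgraph
  intro k
  induction k with
  | zero => intro S w _ _ h; exact h
  | succ k ih =>
    intro S w hw hconn hD
    rcases hD with h | ⟨hint, hrec⟩
    · exact Or.inl h
    · refine Or.inr ⟨neb_count A hskew T hT hgraph S w hw hconn hint, ?_⟩
      intro v hv hadj
      have hvc : v ∈ comp T (S.erase w) v := self_mem_comp hv
      refine ih (comp T (S.erase w) v) v hvc (fun u hu => comp_connected hu) ?_
      have h' := hrec v hv (by rw [hG]; exact hadj)
      rwa [hG] at h'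

end Combo
/-- If a tree `T` of order `n ≥ 3` is not NEB at a vertex `v`, then no real
skew-symmetric matrix with graph `T` has the Duarte property with respect
to `v`. -/
theorem stmt_12 {N : ℕ} (hN : 3 ≤ N) (T : SimpleGraph (Fin N)) (hT : T.IsTree)
    (v : Fin N) (hNEB : ¬ NEB T v)
    (A : Matrix (Fin N) (Fin N) ℝ) (hskew : Aᵀ = -A)
    (hgraph : ∀ i j, i ≠ j → (A i j ≠ 0 ↔ T.Adj i j)) :
    ¬ Duarte A v := by
  intro hD
  apply hNEB
  exact duarteAux_to_nebAux A T hT hskew hgraph N Finset.univ v (Finset.mem_univ v)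
    (fun u _ => ⟨(hT.isConnected.preconnected v u).some, fun x _ => Finset.mem_univ x⟩) hD
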